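/- Let G = SL₂(ℤ) and H the subgroup of upper-triangular matrices in G (lower-left entry zero). Then S(H) = H, i.e., for g ∈ G, the subgroup gHg⁻¹ ∩ H has finite index in H if and only if g ∈ H. -/

import Mathlib

open Matrix

/-- The subgroup of upper-triangular matrices (lower-left entry zero) in `SL₂(ℤ)`. -/
def upperTriSL2 : Subgroup (Matrix.SpecialLinearGroup (Fin 2) ℤ) where
  carrier := {g | (g : Matrix (Fin 2) (Fin 2) ℤ) 1 0 = 0}
  one_mem' := by simp [Matrix.SpecialLinearGroup.coe_one]
  mul_mem' := by
    intro a b ha hb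
    simp only [Set.mem_setOf_eq, Matrix.SpecialLinearGroup.coe_mul] at *
    rw [Matrix.mul_apply, Fin.sum_univ_two, ha, hb]
    ring
  inv_mem' := by
    intro a ha
    simp only [Set.mem_setOf_eq] at *
    rw [Matrix.SpecialLinearGroup.coe_inv, Matrix.adjugate_fin_two]
    simp [ha]

lemma mem_upperTriSL2 (x : Matrix.SpecialLinearGroup (Fin 2) ℤ) :
    x ∈ upperTriSL2 ↔ (x : Matrix (Fin 2) (Fin 2) ℤ) 1 0 = 0 := Iff.rfl

/-- The "translation" matrices `[[1,n],[0,1]]` as elements of the upper triangular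
subgroup. -/
noncomputable def upperT (n : ℤ) : ↥upperTriSL2 :=
  ⟨(⟨!![1, n; 0, 1], by simp [Matrix.det_fin_two_of]⟩ : Matrix.SpecialLinearGroup (Fin 2) ℤ),
    (mem_upperTriSL2 _).mpr rfl⟩

instance : Infinite ↥upperTriSL2 := by
  refine Infinite.of_injective upperT (fun m n h => ?_)
  have : ((upperT m : Matrix.SpecialLinearGroup (Fin 2) ℤ) :
      Matrix (Fin 2) (Fin 2) ℤ) 0 1 =
      ((upperT n : Matrix.SpecialLinearGroup (Fin 2) ℤ) :
      Matrix (Fin 2) (Fin 2) ℤ) 0 1 := by rw [h]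
  simpa [upperT] using this

theorem stmt6 (g : Matrix.SpecialLinearGroup (Fin 2) ℤ) :
    (upperTriSL2.map (MulAut.conj g).toMonoidHom).relIndex upperTriSL2 ≠ 0 ↔
      g ∈ upperTriSL2 := by
  constructor
  · intro h
    by_contra hc
    rw [mem_upperTriSL2] at hc
    set c : ℤ := (g : Matrix (Fin 2) (Fin 2) ℤ) 1 0 with hcdef
    -- The intersection subgroup
    set K := (upperTriSL2.map (MulAut.conj g).toMonoidHom).subgroupOf upperTriSL2 with hK
    -- every element of K is ±1
    have key : ∀ x : ↥upperTriSL2, x ∈ K → x = ⟨1, one_mem _⟩ ∨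
        x = ⟨-1, by rw [mem_upperTriSL2]; simp⟩ := by
      rintro ⟨x, hxH⟩ hxK
      rw [hK, Subgroup.mem_subgroupOf] at hxK
      rw [Subgroup.mem_map_equiv] at hxK
      rw [mem_upperTriSL2] at hxH hxK
      simp only [MulAut.conj_symm_apply] at hxK
      -- expand the matrix entry
      have hdet : (x : Matrix (Fin 2) (Fin 2) ℤ).det = 1 := x.prop
      rw [Matrix.det_fin_two] at hdet
      rw [hxH, mul_zero, sub_zero] at hdet
      rcases Int.mul_eq_one_iff_eq_one_or_neg_one.mp hdet with ⟨hp, hs⟩ | ⟨hp, hs⟩ <;>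
      · -- compute the 1 0 entry of g⁻¹ * x * g
        have hentry : ((((g⁻¹ * x * g : Matrix.SpecialLinearGroup (Fin 2) ℤ)) :
            Matrix (Fin 2) (Fin 2) ℤ)) 1 0 =
            -c ^ 2 * (x : Matrix (Fin 2) (Fin 2) ℤ) 0 1 := by
          simp only [Matrix.SpecialLinearGroup.coe_mul,
            Matrix.SpecialLinearGroup.coe_inv, Matrix.adjugate_fin_two,
            Matrix.mul_apply, Fin.sum_univ_two]
          simp [hxH, hp, hs, ← hcdef]
          ring
        rw [hentry] at hxK
        have hq : (x : Matrix (Fin 2) (Fin 2) ℤ) 0 1 = 0 := by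
          have hc2 : -c ^ 2 ≠ 0 := by
            intro h0
            apply hc
            nlinarith [sq_nonneg c]
          exact (mul_eq_zero.mp hxK).resolve_left hc2
        first
        | · left
            apply Subtype.ext; apply Subtype.ext
            ext i j
            fin_cases i <;> fin_cases j <;>
              simp [hp, hs, hq, hxH]
        | · right
            apply Subtype.ext; apply Subtype.ext
            ext i j
            fin_cases i <;> fin_cases j <;>
              simp [hp, hs, hq, hxH]
    -- hence K is finite
    have hsub : (K : Set ↥upperTriSL2) ⊆
        {⟨1, one_mem _⟩, ⟨-1, by rw [mem_upperTriSL2]; simp⟩} := by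
      intro x hx
      rcases key x hx with h1 | h1 <;> simp [h1]
    have hfin : Finite ↥K :=
      (Set.Finite.subset ((Set.finite_singleton _).insert _) hsub).to_subtype
    have hcard : Nat.card ↥K ≠ 0 := by
      haveI := hfin
      exact Nat.card_pos.ne'
    have hmul := Subgroup.card_mul_index K
    rw [show Nat.card ↥upperTriSL2 = 0 from Nat.card_eq_zero_of_infinite] at hmul
    have : K.index = 0 := by
      rcases Nat.mul_eq_zero.mp hmul with h0 | h0
      · exact absurd h0 hcard
      · exact h0
    exact h this
  · intro hg
    have : upperTriSL2.map (MulAut.conj g).toMonoidHom = upperTriSL2 := by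
      ext x
      rw [Subgroup.mem_map_equiv, MulAut.conj_symm_apply]
      constructor
      · intro hx
        have := upperTriSL2.mul_mem (upperTriSL2.mul_mem hg hx) (upperTriSL2.inv_mem hg)
        simpa [mul_assoc] using this
      · intro hx
        exact upperTriSL2.mul_mem (upperTriSL2.mul_mem (upperTriSL2.inv_mem hg) hx) hg
    rw [this, Subgroup.relIndex_self]
    exact one_ne_zero
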